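/- Let τ > 0 and define a : [0,τ) → ℝ by a(t) = −(0.5 − sin(1/(τ−t)))/(τ−t)³. Then: (i) ∫₀ᵗ a(s) ds → −∞ as t → τ⁻, so every differentiable x : [0,τ) → ℝ with x'(t) = a(t)x(t) satisfies x(t) = x(0)·exp(∫₀ᵗ a(s) ds) → 0 as t → τ⁻ (the scalar system is prescribed-time attractive at τ); (ii) a(t) does not tend to a limit in the extended reals as t → τ⁻; in fact limsup_{t→τ⁻} a(t) = +∞ and liminf_{t→τ⁻} a(t) = −∞. -/

import Mathlib

open Matrix Filter Topology

/-- Eigenvalues of a real matrix that is Hermitian (= symmetric); junk value `0` otherwise. -/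
noncomputable def eigs {n : ℕ} (M : Matrix (Fin n) (Fin n) ℝ) : Fin n → ℝ :=
  if h : M.IsHermitian then h.eigenvalues else 0

/-- Largest eigenvalue of a real symmetric matrix. -/
noncomputable def lamMax {n : ℕ} (M : Matrix (Fin n) (Fin n) ℝ) : ℝ := ⨆ i, eigs M i

/-- Smallest eigenvalue of a real symmetric matrix. -/
noncomputable def lamMin {n : ℕ} (M : Matrix (Fin n) (Fin n) ℝ) : ℝ := ⨅ i, eigs M i

/-- Logarithmic norm w.r.t. the Euclidean norm: `μ(M) = λ_max((M + Mᵀ)/2)`. -/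
noncomputable def logNorm {n : ℕ} (M : Matrix (Fin n) (Fin n) ℝ) : ℝ :=
  lamMax ((1 / 2 : ℝ) • (M + Mᵀ))

/-- A matrix acting on Euclidean space. -/
noncomputable def mulVecE {n : ℕ} (M : Matrix (Fin n) (Fin n) ℝ)
    (v : EuclideanSpace ℝ (Fin n)) : EuclideanSpace ℝ (Fin n) :=
  Matrix.toEuclideanCLM (𝕜 := ℝ) M v

/-- Operator norm of a matrix induced by the Euclidean vector norm. -/
noncomputable def opNorm {n : ℕ} (M : Matrix (Fin n) (Fin n) ℝ) : ℝ :=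
  ‖Matrix.toEuclideanCLM (𝕜 := ℝ) M‖

noncomputable def Gaux : ℝ → ℝ := fun v => -(v ^ 2 / 4) + Real.sin v - v * Real.cos v

lemma Gaux_hasDerivAt (v : ℝ) : HasDerivAt Gaux (v * Real.sin v - v / 2) v := by
  have h1 : HasDerivAt (fun v : ℝ => -(v ^ 2 / 4)) (-(v / 2)) v := by
    have h := ((hasDerivAt_pow 2 v).div_const 4).neg
    refine h.congr_deriv ?_
    norm_num
    ring
  have h2 := Real.hasDerivAt_sin v
  have h3 : HasDerivAt (fun v : ℝ => v * Real.cos v)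
      (1 * Real.cos v + v * (-Real.sin v)) v :=
    (hasDerivAt_id v).mul (Real.hasDerivAt_cos v)
  have := (h1.add h2).sub h3
  refine this.congr_deriv ?_
  ring

lemma Gaux_tendsto : Tendsto Gaux atTop atBot := by
  have hb : ∀ᶠ v in (atTop : Filter ℝ), Gaux v ≤ 1 - v := by
    filter_upwards [eventually_ge_atTop (8 : ℝ)] with v hv
    have h1 := Real.sin_le_one v
    have h2 := Real.neg_one_le_cos v
    have h3 := Real.cos_le_one v
    simp only [Gaux]
    nlinarith
  have hl : Tendsto (fun v : ℝ => 1 - v) atTop atBot := by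
    apply tendsto_atBot_add_const_left
    exact tendsto_neg_atTop_atBot
  exact tendsto_atBot_mono' _ hb hl


/-- counterexample of Remark 1: for
`a(t) = -(0.5 - sin(1/(τ-t)))/(τ-t)³`, the integral `∫₀ᵗ a → -∞` (so the scalar system is
PTA at `τ`, every solution being `x₀ exp(∫₀ᵗ a) → 0`), yet `a(t)` has no extended-real
limit as `t → τ⁻`: its limsup is `+∞` and its liminf is `-∞`. -/
theorem stmt15 (τ : ℝ) (hτ : 0 < τ) (a : ℝ → ℝ)
    (ha : ∀ t, a t = -((0.5 - Real.sin (1 / (τ - t))) / (τ - t) ^ 3)) :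
    (Tendsto (fun t => ∫ s in (0 : ℝ)..t, a s) (𝓝[<] τ) atBot ∧
      ∀ x : ℝ → ℝ, (∀ t ∈ Set.Ico (0 : ℝ) τ, HasDerivAt x (a t * x t) t) →
        (∀ t ∈ Set.Ico (0 : ℝ) τ, x t = x 0 * Real.exp (∫ s in (0 : ℝ)..t, a s)) ∧
        Tendsto (fun t => |x t|) (𝓝[<] τ) (𝓝 0)) ∧
    ((¬ ∃ L : EReal, Tendsto (fun t => ((a t : ℝ) : EReal)) (𝓝[<] τ) (𝓝 L)) ∧
      Filter.limsup (fun t => ((a t : ℝ) : EReal)) (𝓝[<] τ) = ⊤ ∧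
      Filter.liminf (fun t => ((a t : ℝ) : EReal)) (𝓝[<] τ) = ⊥) := by
  set F : ℝ → ℝ := fun t => Gaux ((τ - t)⁻¹) with hFdef
  -- derivative of F is a
  have hFderiv : ∀ t, t < τ → HasDerivAt F (a t) t := by
    intro t ht
    have hupos : 0 < τ - t := by linarith
    have hu : τ - t ≠ 0 := ne_of_gt hupos
    have h1 : HasDerivAt (fun t : ℝ => τ - t) (-1) t := by
      exact ((hasDerivAt_const t τ).sub (hasDerivAt_id t)).congr_deriv (by ring)
    have hinv : HasDerivAt (fun t : ℝ => (τ - t)⁻¹) (((τ - t) ^ 2)⁻¹) t := by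
      have := h1.inv hu
      refine this.congr_deriv ?_
      field_simp
    have hcomp := (Gaux_hasDerivAt ((τ - t)⁻¹)).comp t hinv
    refine hcomp.congr_deriv ?_
    rw [ha t, one_div]
    field_simp
    ring
  -- integral formula
  have hint : ∀ t ∈ Set.Ico (0 : ℝ) τ, (∫ s in (0 : ℝ)..t, a s) = F t - F 0 := by
    intro t ht
    obtain ⟨ht0, htτ⟩ := ht
    have huicc : Set.uIcc (0 : ℝ) t = Set.Icc 0 t := Set.uIcc_of_le ht0
    have hconta : ContinuousOn a (Set.Icc 0 t) := by
      intro s hs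
      have hsτ : s < τ := lt_of_le_of_lt hs.2 htτ
      have hu : τ - s ≠ 0 := ne_of_gt (by linarith)
      apply ContinuousAt.continuousWithinAt
      have hfun : a = fun s => -((0.5 - Real.sin (1 / (τ - s))) / (τ - s) ^ 3) := funext ha
      rw [hfun]
      have h1 : ContinuousAt (fun s : ℝ => τ - s) s :=
        (continuous_const.sub continuous_id).continuousAt
      have h2 : ContinuousAt (fun s : ℝ => 1 / (τ - s)) s := continuousAt_const.div h1 hu
      have h3 : ContinuousAt (fun s : ℝ => Real.sin (1 / (τ - s))) s :=
        Real.continuous_sin.continuousAt.comp h2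
      have h4 : ContinuousAt (fun s : ℝ => (τ - s) ^ 3) s := h1.pow 3
      exact ((continuousAt_const.sub h3).div h4 (pow_ne_zero 3 hu)).neg
    have hI : IntervalIntegrable a MeasureTheory.volume 0 t :=
      (hconta.mono (by rw [huicc])).intervalIntegrable
    exact intervalIntegral.integral_eq_sub_of_hasDerivAt
      (fun s hs => hFderiv s (lt_of_le_of_lt (huicc ▸ hs).2 htτ)) hI
  -- tendsto of the substitution
  have hv : Tendsto (fun t => (τ - t)⁻¹) (𝓝[<] τ) atTop := by
    apply tendsto_inv_nhdsGT_zero.comp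
    rw [tendsto_nhdsWithin_iff]
    constructor
    · have : Tendsto (fun t : ℝ => τ - t) (𝓝 τ) (𝓝 (τ - τ)) :=
        tendsto_const_nhds.sub tendsto_id
      simpa using this.mono_left nhdsWithin_le_nhds
    · filter_upwards [self_mem_nhdsWithin] with t ht
      exact Set.mem_Ioi.mpr (sub_pos.mpr ht)
  have hFtend : Tendsto F (𝓝[<] τ) atBot := Gaux_tendsto.comp hv
  have hIootop : Set.Ioo (0 : ℝ) τ ∈ 𝓝[<] τ := Ioo_mem_nhdsLT_of_mem ⟨hτ, le_refl τ⟩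
  have hItend : Tendsto (fun t => ∫ s in (0 : ℝ)..t, a s) (𝓝[<] τ) atBot := by
    apply Tendsto.congr' ?_ (tendsto_atBot_add_const_right _ (-(F 0)) hFtend)
    filter_upwards [hIootop] with t ht
    rw [hint t ⟨le_of_lt ht.1, ht.2⟩]
    ring
  -- sequences realizing limsup/liminf
  have hpi := Real.pi_pos
  have hseq : ∀ c₀ : ℝ, 0 < c₀ →
      Tendsto (fun n : ℕ => τ - (c₀ + n * (2 * Real.pi))⁻¹) atTop (𝓝[<] τ) ∧
      ∀ n : ℕ, a (τ - (c₀ + n * (2 * Real.pi))⁻¹) =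
        (Real.sin c₀ - 0.5) * (c₀ + n * (2 * Real.pi)) ^ 3 := by
    intro c₀ hc₀
    have hcpos : ∀ n : ℕ, 0 < c₀ + n * (2 * Real.pi) := by
      intro n; positivity
    constructor
    · rw [tendsto_nhdsWithin_iff]
      constructor
      · have hct : Tendsto (fun n : ℕ => c₀ + n * (2 * Real.pi)) atTop atTop := by
          apply tendsto_atTop_add_const_left
          exact Tendsto.atTop_mul_const (by positivity)
            tendsto_natCast_atTop_atTop
        have : Tendsto (fun n : ℕ => (c₀ + n * (2 * Real.pi))⁻¹) atTop (𝓝 0) :=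
          hct.inv_tendsto_atTop
        simpa using tendsto_const_nhds.sub this
      · filter_upwards with n
        exact Set.mem_Iio.mpr (sub_lt_self _ (inv_pos.mpr (hcpos n)))
    · intro n
      rw [ha]
      have h1 : τ - (τ - (c₀ + n * (2 * Real.pi))⁻¹) = (c₀ + n * (2 * Real.pi))⁻¹ := by ring
      rw [h1, one_div, inv_inv, Real.sin_add_nat_mul_two_pi]
      have h2 := (hcpos n).ne'
      field_simp
      ring
  have htop : Filter.limsup (fun t => ((a t : ℝ) : EReal)) (𝓝[<] τ) = ⊤ := by
    rw [EReal.eq_top_iff_forall_lt]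
    intro y
    have hy1 : (y : EReal) < ((y + 1 : ℝ) : EReal) := by exact_mod_cast lt_add_one y
    refine lt_of_lt_of_le hy1 (le_limsup_of_frequently_le' ?_)
    obtain ⟨hts, hval⟩ := hseq (Real.pi / 2) (by positivity)
    have hct : Tendsto (fun n : ℕ => Real.pi / 2 + n * (2 * Real.pi)) atTop atTop := by
      apply tendsto_atTop_add_const_left
      exact Tendsto.atTop_mul_const (by positivity) tendsto_natCast_atTop_atTop
    have hat : Tendsto (fun n : ℕ => a (τ - (Real.pi / 2 + n * (2 * Real.pi))⁻¹))
        atTop atTop := by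
      have hpow : Tendsto (fun n : ℕ => (Real.pi / 2 + n * (2 * Real.pi)) ^ 3) atTop atTop :=
        (tendsto_pow_atTop (by norm_num)).comp hct
      have : Tendsto (fun n : ℕ =>
          (Real.sin (Real.pi / 2) - 0.5) * (Real.pi / 2 + n * (2 * Real.pi)) ^ 3)
          atTop atTop := by
        apply Tendsto.const_mul_atTop ?_ hpow
        rw [Real.sin_pi_div_two]; norm_num
      exact this.congr fun n => (hval n).symm
    refine hts.frequently ((hat.eventually_ge_atTop (y + 1)).frequently.mono ?_)
    intro n hn
    exact_mod_cast hn
  have hbot : Filter.liminf (fun t => ((a t : ℝ) : EReal)) (𝓝[<] τ) = ⊥ := by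
    rw [EReal.eq_bot_iff_forall_lt]
    intro y
    have hy1 : ((y - 1 : ℝ) : EReal) < (y : EReal) := by exact_mod_cast sub_one_lt y
    refine lt_of_le_of_lt (liminf_le_of_frequently_le' ?_) hy1
    obtain ⟨hts, hval⟩ := hseq (Real.pi / 2 + Real.pi) (by positivity)
    have hct : Tendsto (fun n : ℕ => Real.pi / 2 + Real.pi + n * (2 * Real.pi)) atTop atTop := by
      apply tendsto_atTop_add_const_left
      exact Tendsto.atTop_mul_const (by positivity) tendsto_natCast_atTop_atTop
    have hat : Tendsto (fun n : ℕ =>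
        a (τ - (Real.pi / 2 + Real.pi + n * (2 * Real.pi))⁻¹)) atTop atBot := by
      have hpow : Tendsto (fun n : ℕ =>
          (Real.pi / 2 + Real.pi + n * (2 * Real.pi)) ^ 3) atTop atTop :=
        (tendsto_pow_atTop (by norm_num)).comp hct
      have : Tendsto (fun n : ℕ =>
          (Real.sin (Real.pi / 2 + Real.pi) - 0.5) *
            (Real.pi / 2 + Real.pi + n * (2 * Real.pi)) ^ 3) atTop atBot := by
        apply Tendsto.const_mul_atTop_of_neg ?_ hpow
        rw [Real.sin_add_pi, Real.sin_pi_div_two]; norm_num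
      exact this.congr fun n => (hval n).symm
    refine hts.frequently ((hat.eventually_le_atBot (y - 1)).frequently.mono ?_)
    intro n hn
    exact_mod_cast hn
  refine ⟨⟨hItend, ?_⟩, ?_, htop, hbot⟩
  · -- solutions
    intro x hx
    have key : ∀ t ∈ Set.Ico (0 : ℝ) τ, x t = x 0 * Real.exp (∫ s in (0 : ℝ)..t, a s) := by
      intro t ht
      have hgd : ∀ s, 0 ≤ s → s < τ →
          HasDerivAt (fun s => x s * Real.exp (-(F s))) 0 s := by
        intro s hs0 hsτ
        have hxd := hx s ⟨hs0, hsτ⟩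
        have hed : HasDerivAt (fun s => Real.exp (-(F s)))
            (Real.exp (-(F s)) * -(a s)) s := ((hFderiv s hsτ).neg).exp
        have := hxd.mul hed
        refine this.congr_deriv ?_
        ring
      have hcont : ContinuousOn (fun s => x s * Real.exp (-(F s))) (Set.Icc 0 t) :=
        fun s hs => ((hgd s hs.1 (lt_of_le_of_lt hs.2 ht.2)).continuousAt).continuousWithinAt
      have heq : x t * Real.exp (-(F t)) = x 0 * Real.exp (-(F 0)) :=
        constant_of_has_deriv_right_zero hcont
          (fun s hs => (hgd s hs.1 (lt_of_lt_of_le hs.2 (le_of_lt ht.2))).hasDerivWithinAt)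
          t ⟨ht.1, le_refl t⟩
      rw [hint t ht]
      calc x t = x t * Real.exp (-(F t)) * Real.exp (F t) := by
            rw [mul_assoc, ← Real.exp_add]; simp
        _ = x 0 * Real.exp (-(F 0)) * Real.exp (F t) := by rw [heq]
        _ = x 0 * Real.exp (F t - F 0) := by
            rw [mul_assoc, ← Real.exp_add, show -(F 0) + F t = F t - F 0 from by ring]
    refine ⟨key, ?_⟩
    have h0 : Tendsto (fun t => |x 0| * Real.exp (∫ s in (0 : ℝ)..t, a s)) (𝓝[<] τ)
        (𝓝 (|x 0| * 0)) := tendsto_const_nhds.mul (Real.tendsto_exp_atBot.comp hItend)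
    rw [mul_zero] at h0
    apply Tendsto.congr' ?_ h0
    filter_upwards [hIootop] with t htm
    rw [key t ⟨le_of_lt htm.1, htm.2⟩, abs_mul, Real.abs_exp]
  · -- no limit
    rintro ⟨L, hL⟩
    have h1 := hL.limsup_eq
    have h2 := hL.liminf_eq
    rw [htop] at h1
    rw [hbot] at h2
    rw [← h1] at h2
    simp at h2
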